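/- For every weight matrix W = (w_1, …, w_m) ∈ ℝ^{d×m}, the dropout loss equals a kernel ridge regression objective: L(W) = (1/2)‖Φ̂_W W̄ − Y‖₂² + (λ/2) W̄^⊤ Ψ̂_W W̄, where λ = (1−q)/q. -/

import Mathlib

/-- The ReLU activation. -/
noncomputable def relu (z : ℝ) : ℝ := max z 0

/-- The indicator `𝟙{z ≥ 0}` as a real number. -/
noncomputable def ind (z : ℝ) : ℝ := if 0 ≤ z then 1 else 0

/-- The dropout network `F(W, x, σ) = (1/√m) Σ_r a_r σ_r φ(w_r^⊤ x)`, where the mask is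
encoded by `σ : Fin m → Bool`, with `σ_r = 1/q` when `σ r = true` and `σ_r = 0` otherwise. -/
noncomputable def dropoutNet (m d : ℕ) (q : ℝ) (a : Fin m → ℝ) (σ : Fin m → Bool)
    (W : Fin m → Fin d → ℝ) (x : Fin d → ℝ) : ℝ :=
  (1 / Real.sqrt m) * ∑ r, a r * (if σ r then 1 / q else 0) * relu (∑ k, W r k * x k)

/-- The dropout loss `L(W) = (1/2) E_σ[Σ_i (F(W, x_i, σ) − y_i)²]`, the expectation written
as a finite sum over all masks `σ : Fin m → Bool` with their probabilities. -/
noncomputable def dropoutLoss (m d n : ℕ) (q : ℝ) (a : Fin m → ℝ)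
    (x : Fin n → Fin d → ℝ) (y : Fin n → ℝ) (W : Fin m → Fin d → ℝ) : ℝ :=
  (1 / 2) * ∑ σ : Fin m → Bool,
    (∏ r, if σ r then q else 1 - q) *
      ∑ i, (dropoutNet m d q a σ W (x i) - y i) ^ 2

/-- The feature matrix `Φ̂_W ∈ ℝ^{n × md}`, whose `i`-th row is
`(1/√m)[a_1 𝟙{w_1^⊤x_i ≥ 0} x_i^⊤, …, a_m 𝟙{w_m^⊤x_i ≥ 0} x_i^⊤]`;
the index set `Fin m × Fin d` encodes the stacked columns of `W`. -/
noncomputable def PhiHat (m d n : ℕ) (a : Fin m → ℝ) (x : Fin n → Fin d → ℝ)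
    (W : Fin m → Fin d → ℝ) : Matrix (Fin n) (Fin m × Fin d) ℝ :=
  Matrix.of fun i p => (1 / Real.sqrt m) * a p.1 * ind (∑ k, W p.1 k * x i k) * x i p.2

/-- The block-diagonal matrix `Ψ̂_W = (1/m) diag(ψ̂_1, …, ψ̂_m) ∈ ℝ^{md × md}` with
`ψ̂_r = Σ_i x_i x_i^⊤ · 𝟙{w_r^⊤ x_i ≥ 0}`. -/
noncomputable def PsiHat (m d n : ℕ) (x : Fin n → Fin d → ℝ)
    (W : Fin m → Fin d → ℝ) : Matrix (Fin m × Fin d) (Fin m × Fin d) ℝ :=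
  Matrix.of fun p p' =>
    if p.1 = p'.1 then
      (1 / (m : ℝ)) * ∑ i, x i p.2 * x i p'.2 * ind (∑ k, W p.1 k * x i k)
    else 0

/-- `W̄ = vec(W) ∈ ℝ^{md}`: the columns `w_1, …, w_m` stacked. -/
def vecW (m d : ℕ) (W : Fin m → Fin d → ℝ) : Fin m × Fin d → ℝ := fun p => W p.1 p.2

section DKRRHelpers
open Finset


/-- sum over masks of a product factorizes. -/
lemma dkrr_mask_sum_prod {m : ℕ} (h : Fin m → Bool → ℝ) :
    ∑ σ : Fin m → Bool, ∏ r, h r (σ r) = ∏ r, ∑ b, h r b :=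
  (Fintype.prod_sum h).symm

lemma dkrr_E0 {m : ℕ} {q : ℝ} :
    ∑ σ : Fin m → Bool, (∏ r, if σ r then q else 1 - q) = 1 := by
  rw [dkrr_mask_sum_prod (fun _ b => if b then q else 1 - q)]
  simp [Fintype.sum_bool]

lemma dkrr_E1 {m : ℕ} {q : ℝ} (hq0 : q ≠ 0) (r : Fin m) :
    ∑ σ : Fin m → Bool, (∏ t, if σ t then q else 1 - q) *
      (if σ r then 1/q else 0) = 1 := by
  have : ∀ σ : Fin m → Bool,
      (∏ t, if σ t then q else 1 - q) * (if σ r then 1/q else 0)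
      = ∏ t, (if σ t then q else 1 - q) * (if t = r then (if σ t then 1/q else 0) else 1) := by
    intro σ
    rw [Finset.prod_mul_distrib, Finset.prod_ite_eq' Finset.univ r
      (fun t => if σ t then 1/q else 0)]
    simp
  simp_rw [this]
  rw [dkrr_mask_sum_prod (fun t b => (if b then q else 1 - q) *
    if t = r then (if b then 1/q else 0) else 1)]
  rw [Finset.prod_eq_one]
  intro t _
  by_cases h : t = r <;> simp [h, Fintype.sum_bool] <;> field_simp

lemma dkrr_E2 {m : ℕ} {q : ℝ} (hq0 : q ≠ 0) (r s : Fin m) :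
    ∑ σ : Fin m → Bool, (∏ t, if σ t then q else 1 - q) *
      ((if σ r then 1/q else 0) * (if σ s then 1/q else 0))
      = if r = s then 1/q else 1 := by
  have key : ∀ σ : Fin m → Bool,
      (∏ t, if σ t then q else 1 - q) *
        ((if σ r then 1/q else 0) * (if σ s then 1/q else 0))
      = ∏ t, (if σ t then q else 1 - q) *
          ((if t = r then (if σ t then 1/q else 0) else 1) *
           (if t = s then (if σ t then 1/q else 0) else 1)) := by
    intro σ
    rw [Finset.prod_mul_distrib, Finset.prod_mul_distrib,
      Finset.prod_ite_eq' Finset.univ r (fun t => if σ t then 1/q else 0),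
      Finset.prod_ite_eq' Finset.univ s (fun t => if σ t then 1/q else 0)]
    simp
  simp_rw [key]
  rw [dkrr_mask_sum_prod (fun t b => (if b then q else 1 - q) *
      ((if t = r then (if b then 1/q else 0) else 1) *
       (if t = s then (if b then 1/q else 0) else 1)))]
  by_cases hrs : r = s
  · subst hrs
    simp only [if_pos rfl]
    rw [Finset.prod_eq_single r]
    · simp [Fintype.sum_bool]; field_simp
    · intro t _ ht
      simp [ht, Fintype.sum_bool]
    · simp
  · rw [if_neg hrs, Finset.prod_eq_one]
    intro t _
    by_cases h1 : t = r
    · subst h1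
      simp [hrs, Fintype.sum_bool, hq0]
    · by_cases h2 : t = s
      · subst h2
        simp [h1, Fintype.sum_bool, hq0]
      · simp [h1, h2, Fintype.sum_bool]

lemma dkrr_expect_sq {m : ℕ} {q : ℝ} (hq0 : q ≠ 0) (g : Fin m → ℝ) (y : ℝ) :
    ∑ σ : Fin m → Bool, (∏ r, if σ r then q else 1 - q) *
      (∑ r, (if σ r then 1/q else 0) * g r - y) ^ 2
    = (∑ r, g r - y) ^ 2 + (1 - q)/q * ∑ r, g r ^ 2 := by
  have h1 : ∑ σ : Fin m → Bool, (∏ t, if σ t then q else 1 - q) *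
      (∑ r, (if σ r then 1/q else 0) * g r) = ∑ r, g r := by
    simp_rw [Finset.mul_sum, ← mul_assoc]
    rw [Finset.sum_comm]
    refine Finset.sum_congr rfl fun r _ => ?_
    rw [← Finset.sum_mul, dkrr_E1 hq0 r, one_mul]
  have h2 : ∑ σ : Fin m → Bool, (∏ t, if σ t then q else 1 - q) *
      (∑ r, (if σ r then 1/q else 0) * g r) ^ 2
      = (∑ r, g r) ^ 2 + (1/q - 1) * ∑ r, g r ^ 2 := by
    have expand : ∀ σ : Fin m → Bool,
        (∑ r, (if σ r then 1/q else 0) * g r) ^ 2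
        = ∑ r, ∑ s, ((if σ r then 1/q else 0) * (if σ s then 1/q else 0)) *
            (g r * g s) := by
      intro σ
      rw [sq, Finset.sum_mul_sum]
      exact Finset.sum_congr rfl fun r _ => Finset.sum_congr rfl fun s _ => by ring
    simp_rw [expand, Finset.mul_sum]
    rw [Finset.sum_comm]
    have step : ∀ r : Fin m,
        (∑ σ : Fin m → Bool, ∑ s,
          (∏ t, if σ t then q else 1 - q) *
            (((if σ r then 1/q else 0) * (if σ s then 1/q else 0)) * (g r * g s)))
        = ∑ s, (if r = s then 1/q else 1) * (g r * g s) := by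
      intro r
      rw [Finset.sum_comm]
      refine Finset.sum_congr rfl fun s _ => ?_
      have assoc : ∀ σ : Fin m → Bool,
          (∏ t, if σ t then q else 1 - q) *
            (((if σ r then 1/q else 0) * (if σ s then 1/q else 0)) * (g r * g s))
          = ((∏ t, if σ t then q else 1 - q) *
              ((if σ r then 1/q else 0) * (if σ s then 1/q else 0))) * (g r * g s) :=
        fun σ => by ring
      simp_rw [assoc]
      rw [← Finset.sum_mul, dkrr_E2 hq0 r s]
    simp_rw [step]
    have split : ∀ r : Fin m, ∑ s, (if r = s then 1/q else 1) * (g r * g s)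
        = (∑ s, g r * g s) + (1/q - 1) * g r ^ 2 := by
      intro r
      have : ∀ s : Fin m, (if r = s then 1/q else 1) * (g r * g s)
          = g r * g s + (if r = s then (1/q - 1) * (g r * g s) else 0) := by
        intro s; by_cases h : r = s <;> simp [h] <;> ring
      simp_rw [this, Finset.sum_add_distrib, Finset.sum_ite_eq]
      simp [sq]
    simp_rw [split, Finset.sum_add_distrib, ← Finset.mul_sum]
    rw [← Finset.sum_mul, ← sq]
  have key : ∀ σ : Fin m → Bool,
      (∏ t, if σ t then q else 1 - q) *
        (∑ r, (if σ r then 1/q else 0) * g r - y) ^ 2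
      = (∏ t, if σ t then q else 1 - q) *
          (∑ r, (if σ r then 1/q else 0) * g r) ^ 2
        - 2 * y * ((∏ t, if σ t then q else 1 - q) *
            (∑ r, (if σ r then 1/q else 0) * g r))
        + y ^ 2 * (∏ t, if σ t then q else 1 - q) := by
    intro σ; ring
  simp_rw [key]
  rw [Finset.sum_add_distrib, Finset.sum_sub_distrib, ← Finset.mul_sum,
    ← Finset.mul_sum, h1, h2, dkrr_E0]
  field_simp
  ring

lemma relu_eq_ind_mul (z : ℝ) : relu z = ind z * z := by
  unfold relu ind
  by_cases h : 0 ≤ z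
  · simp [max_eq_left h, h]
  · simp [max_eq_right (le_of_not_ge h), h]

lemma relu_sq (z : ℝ) : relu z ^ 2 = ind z * z ^ 2 := by
  unfold relu ind
  by_cases h : 0 ≤ z
  · simp [max_eq_left h, h]
  · simp [max_eq_right (le_of_not_ge h), h]

lemma ind_mul_self (z : ℝ) : ind z * ind z = ind z := by
  unfold ind; by_cases h : 0 ≤ z <;> simp [h]

end DKRRHelpers

/-- For every weight matrix `W`, the dropout loss equals a kernel ridge
regression objective: `L(W) = (1/2)‖Φ̂_W W̄ − Y‖₂² + (λ/2) W̄^⊤ Ψ̂_W W̄` with `λ = (1−q)/q`. -/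
theorem dropout_loss_is_krr (m d n : ℕ) (hm : 0 < m)
    (q : ℝ) (hq0 : 0 < q) (hq1 : q ≤ 1)
    (a : Fin m → ℝ) (ha : ∀ r, a r = 1 ∨ a r = -1)
    (x : Fin n → Fin d → ℝ) (y : Fin n → ℝ) (W : Fin m → Fin d → ℝ) :
    dropoutLoss m d n q a x y W
      = (1 / 2) * ∑ i, ((PhiHat m d n a x W).mulVec (vecW m d W) i - y i) ^ 2
        + ((1 - q) / q / 2) *
          dotProduct (vecW m d W) ((PsiHat m d n x W).mulVec (vecW m d W)) := by

  have hq0' : q ≠ 0 := ne_of_gt hq0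
  have hmR : (0:ℝ) < m := by exact_mod_cast hm
  set g : Fin n → Fin m → ℝ :=
    fun i r => (1 / Real.sqrt m) * a r * relu (∑ k, W r k * x i k) with hg
  -- Step 1: the dropout net is Σ_r c_r g_{i,r}
  have hnet : ∀ (σ : Fin m → Bool) (i : Fin n),
      dropoutNet m d q a σ W (x i) = ∑ r, (if σ r then 1/q else 0) * g i r := by
    intro σ i
    unfold dropoutNet
    rw [Finset.mul_sum]
    exact Finset.sum_congr rfl fun r _ => by simp only [hg]; ring
  -- Step 2: the loss as a sum over i of expectations
  have hloss : dropoutLoss m d n q a x y W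
      = (1/2) * ∑ i, ((∑ r, g i r - y i) ^ 2 + (1 - q)/q * ∑ r, g i r ^ 2) := by
    unfold dropoutLoss
    have distr : ∀ σ : Fin m → Bool,
        (∏ r, if σ r then q else 1 - q) *
          ∑ i, (dropoutNet m d q a σ W (x i) - y i) ^ 2
        = ∑ i, (∏ r, if σ r then q else 1 - q) *
            (dropoutNet m d q a σ W (x i) - y i) ^ 2 := fun σ => Finset.mul_sum _ _ _
    simp_rw [distr]
    rw [Finset.sum_comm]
    congr 1
    refine Finset.sum_congr rfl fun i _ => ?_
    simp_rw [hnet]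
    exact dkrr_expect_sq hq0' (g i) (y i)
  -- Step 3: Φ̂ W̄ = Σ_r g
  have hA : ∀ i, (PhiHat m d n a x W).mulVec (vecW m d W) i = ∑ r, g i r := by
    intro i
    simp only [Matrix.mulVec, dotProduct, PhiHat, vecW, Matrix.of_apply]
    rw [Fintype.sum_prod_type]
    refine Finset.sum_congr rfl fun r _ => ?_
    have : ∑ k : Fin d,
        (1 / Real.sqrt m * a r * ind (∑ k', W r k' * x i k') * x i k) * W r k
        = (1 / Real.sqrt m * a r * ind (∑ k', W r k' * x i k')) *
            ∑ k, W r k * x i k := by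
      rw [Finset.mul_sum]
      exact Finset.sum_congr rfl fun k _ => by ring
    rw [this]
    simp only [hg]
    rw [relu_eq_ind_mul]
    ring
  -- Step 4: the quadratic form
  have hB : dotProduct (vecW m d W) ((PsiHat m d n x W).mulVec (vecW m d W))
      = ∑ i, ∑ r, g i r ^ 2 := by
    have hg2 : ∀ i r, g i r ^ 2
        = (1 / (m:ℝ)) * (ind (∑ k, W r k * x i k) * (∑ k, W r k * x i k) ^ 2) := by
      intro i r
      have ha2 : a r ^ 2 = 1 := by rcases ha r with h | h <;> simp [h]
      have hs : (1 / Real.sqrt m) ^ 2 = 1 / (m:ℝ) := by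
        rw [div_pow, one_pow, Real.sq_sqrt (le_of_lt hmR)]
      simp only [hg]
      rw [mul_pow, mul_pow, relu_sq, hs, ha2]
      ring
    have main : dotProduct (vecW m d W) ((PsiHat m d n x W).mulVec (vecW m d W))
        = ∑ r, ∑ i, g i r ^ 2 := by
      simp only [Matrix.mulVec, dotProduct, PsiHat, vecW, Matrix.of_apply]
      rw [Fintype.sum_prod_type]
      dsimp only
      refine Finset.sum_congr rfl fun r _ => ?_
      have hinner : ∀ k : Fin d,
          (∑ p' : Fin m × Fin d,
            (if r = p'.1 then
                (1 / (m:ℝ)) * ∑ i, x i k * x i p'.2 * ind (∑ k', W r k' * x i k')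
              else 0) * W p'.1 p'.2)
          = ∑ k', ((1 / (m:ℝ)) * ∑ i, x i k * x i k' * ind (∑ k'', W r k'' * x i k'')) *
              W r k' := by
        intro k
        rw [Fintype.sum_prod_type]
        rw [Finset.sum_eq_single r]
        · simp
        · intro r' _ hr'
          rw [Finset.sum_eq_zero]
          intro k' _
          rw [if_neg (fun h => hr' h.symm), zero_mul]
        · simp
      simp_rw [hinner]
      have inner2 : ∀ k : Fin d,
          (∑ k', ((1 / (m:ℝ)) * ∑ i, x i k * x i k' * ind (∑ k'', W r k'' * x i k'')) *
              W r k')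
          = ∑ i, (1 / (m:ℝ)) *
              (x i k * ind (∑ k'', W r k'' * x i k'') * ∑ k', W r k' * x i k') := by
        intro k
        have e1 : ∀ k' : Fin d,
            ((1 / (m:ℝ)) * ∑ i, x i k * x i k' * ind (∑ k'', W r k'' * x i k'')) * W r k'
            = ∑ i, (1 / (m:ℝ)) *
                (x i k * x i k' * ind (∑ k'', W r k'' * x i k'') * W r k') := by
          intro k'
          rw [Finset.mul_sum, Finset.sum_mul]
          exact Finset.sum_congr rfl fun i _ => by ring
        simp_rw [e1]
        rw [Finset.sum_comm]
        refine Finset.sum_congr rfl fun i _ => ?_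
        rw [Finset.mul_sum, Finset.mul_sum]
        exact Finset.sum_congr rfl fun k' _ => by ring
      simp_rw [inner2]
      have e2 : ∀ k : Fin d,
          W r k * ∑ i, (1 / (m:ℝ)) *
              (x i k * ind (∑ k'', W r k'' * x i k'') * ∑ k', W r k' * x i k')
          = ∑ i, (1 / (m:ℝ)) *
              (W r k * x i k * ind (∑ k'', W r k'' * x i k'') *
                ∑ k', W r k' * x i k') := by
        intro k
        rw [Finset.mul_sum]
        exact Finset.sum_congr rfl fun i _ => by ring
      simp_rw [e2]
      rw [Finset.sum_comm]
      refine Finset.sum_congr rfl fun i _ => ?_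
      rw [hg2 i r, sq, Finset.sum_mul, Finset.mul_sum, Finset.mul_sum]
      exact Finset.sum_congr rfl fun k _ => by ring
    rw [main, Finset.sum_comm]
  rw [hloss]
  simp_rw [hA, hB, Finset.sum_add_distrib, ← Finset.mul_sum]
  ring
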